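/- arXiv:1310.6899 — 3 statements merged into one kernel-verified Lean document; each statement's English description precedes it below -/
import Mathlib

section
/- Assume (H1), and (H2) if κ=1, ε ∈ (0,1), w₀ ∈ W, w₁ ∈ W (with w₁ ∈ W ∩ H if κ=1), and let u_ε be a minimizer of J_ε subject to u(0)=w₀, u'(0)=ε w₁. Then there is a constant C independent of ε such that ∫₀^∞ e^{-t} (1/(2ε²))‖u_ε''(t)‖²_{L²} dt ≤ C and ∫₀^∞ e^{-t} (1/(2ε²))‖u_ε'(t)‖²_{L²} dt ≤ C. -/
open MeasureTheory ENNReal Filter Set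
open scoped RealInnerProductSpace NNReal

noncomputable section

/-- The space `L²(ℝⁿ)` of square-integrable real functions. -/
abbrev L2Space (n : ℕ) : Type :=
  MeasureTheory.Lp ℝ 2 (volume : Measure (EuclideanSpace ℝ (Fin n)))

/-- A test function: smooth and compactly supported. -/
def IsTestFun {n : ℕ} (f : EuclideanSpace ℝ (Fin n) → ℝ) : Prop :=
  ContDiff ℝ ((⊤ : ℕ∞) : WithTop ℕ∞) f ∧ HasCompactSupport f

/-- Assumption (H1): the data of the functional `G`, its domain `W` (a Banach space densely and
continuously included in `L²`, containing the test functions densely), weak sequential lower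
semicontinuity, Gâteaux differentiability, and the estimate `‖∇G(v)‖_{W'} ≤ C(1+G(v)^θ)`. -/
structure H1Data (n : ℕ) (W : Type*) [NormedAddCommGroup W] [NormedSpace ℝ W]
    [CompleteSpace W] : Type _ where
  /-- the functional `G : L² → [0,∞]` -/
  G : L2Space n → ℝ≥0∞
  /-- the continuous inclusion `W ↪ L²` -/
  ι : W →L[ℝ] L2Space n
  ι_inj : Function.Injective ι
  denseW : DenseRange ι
  smooth_mem : ∀ f : EuclideanSpace ℝ (Fin n) → ℝ, IsTestFun f →
    ∃ v : W, ⇑(ι v) =ᵐ[volume] f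
  smooth_dense : Dense {v : W | ∃ f : EuclideanSpace ℝ (Fin n) → ℝ,
    IsTestFun f ∧ ⇑(ι v) =ᵐ[volume] f}
  /-- `W = {v ∈ L² : G(v) < ∞}` -/
  domain : ∀ x : L2Space n, G x < ⊤ ↔ x ∈ Set.range ι
  /-- sequential lower semicontinuity with respect to the weak topology of `L²` -/
  wlsc : ∀ (v : ℕ → L2Space n) (v₀ : L2Space n),
    (∀ y : L2Space n, Tendsto (fun k => ⟪v k, y⟫) atTop (nhds ⟪v₀, y⟫)) →
    G v₀ ≤ Filter.liminf (fun k => G (v k)) Filter.atTop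
  /-- the Gâteaux derivative `∇G : W → W'` (extended arbitrarily outside of `range ι`) -/
  gradG : L2Space n → W →L[ℝ] ℝ
  hgrad : ∀ v h : W,
    HasDerivAt (fun δ : ℝ => (G (ι (v + δ • h))).toReal) (gradG (ι v) h) 0
  /-- the constant `C` in the estimate for `∇G` -/
  CG : ℝ
  /-- the exponent `θ ∈ (0,1)` -/
  θ : ℝ
  hCG : 0 ≤ CG
  hθ : θ ∈ Set.Ioo (0 : ℝ) 1
  grad_bound : ∀ v : W, ‖gradG (ι v)‖ ≤ CG * (1 + ((G (ι v)).toReal) ^ θ)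

/-- Assumption (H2): the quadratic dissipative functional `D`, given by a bounded symmetric
nonnegative bilinear form `B` on a Hilbert space `H` densely and continuously included in `L²`,
with `‖v‖_H² = ‖v‖_{L²}² + 2D(v)`, and `D = +∞` outside of `H`. -/
structure H2Data (n : ℕ) (H : Type*) [NormedAddCommGroup H] [NormedSpace ℝ H]
    [CompleteSpace H] : Type _ where
  /-- the functional `D : L² → [0,∞]` -/
  D : L2Space n → ℝ≥0∞
  /-- the continuous inclusion `H ↪ L²` -/
  ιH : H →L[ℝ] L2Space n
  ιH_inj : Function.Injective ιH
  denseH : DenseRange ιH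
  smooth_memH : ∀ f : EuclideanSpace ℝ (Fin n) → ℝ, IsTestFun f →
    ∃ v : H, ⇑(ιH v) =ᵐ[volume] f
  smooth_denseH : Dense {v : H | ∃ f : EuclideanSpace ℝ (Fin n) → ℝ,
    IsTestFun f ∧ ⇑(ιH v) =ᵐ[volume] f}
  /-- the bilinear form `B` -/
  B : H →L[ℝ] H →L[ℝ] ℝ
  B_symm : ∀ x y : H, B x y = B y x
  B_nonneg : ∀ x : H, 0 ≤ B x x
  domainH : ∀ x : L2Space n, D x < ⊤ ↔ x ∈ Set.range ιH
  D_eq : ∀ h : H, D (ιH h) = ENNReal.ofReal (B h h / 2)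
  norm_eq : ∀ h : H, ‖h‖ ^ 2 = ‖ιH h‖ ^ 2 + B h h
  /-- the Gâteaux derivative `∇D : H → H'`, `⟨∇D(v),η⟩ = B(v,η)`
  (extended arbitrarily outside of `range ιH`) -/
  gradD : L2Space n → H →L[ℝ] ℝ
  gradD_eq : ∀ v : H, gradD (ιH v) = B v

/-- An element of `H²_loc([0,∞); L²)`: `u` and its derivative `d = u'` are locally absolutely
continuous (primitives of their derivatives), and `dd = u''` belongs to `L²((0,T);L²)` for
every `T > 0`. -/
structure Traj (n : ℕ) where
  /-- the function `u` -/
  u : ℝ → L2Space n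
  /-- the derivative `u'` -/
  d : ℝ → L2Space n
  /-- the second derivative `u''` -/
  dd : ℝ → L2Space n
  memL2 : ∀ T > 0, MemLp dd 2 (volume.restrict (Set.Ioc (0 : ℝ) T))
  int_dd : ∀ T > 0, IntervalIntegrable dd volume 0 T
  int_d : ∀ T > 0, IntervalIntegrable d volume 0 T
  hd : ∀ t ≥ (0 : ℝ), d t = d 0 + ∫ s in (0 : ℝ)..t, dd s
  hu : ∀ t ≥ (0 : ℝ), u t = u 0 + ∫ s in (0 : ℝ)..t, d s

/-- An element of `H¹_loc([0,∞); L²)`: `u` is locally absolutely continuous with derivative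
`d = u'` in `L²((0,T);L²)` for every `T > 0`. -/
structure Traj1 (n : ℕ) where
  /-- the function `u` -/
  u : ℝ → L2Space n
  /-- the derivative `u'` -/
  d : ℝ → L2Space n
  memL2 : ∀ T > 0, MemLp d 2 (volume.restrict (Set.Ioc (0 : ℝ) T))
  int_d : ∀ T > 0, IntervalIntegrable d volume 0 T
  hu : ∀ t ≥ (0 : ℝ), u t = u 0 + ∫ s in (0 : ℝ)..t, d s

variable {n : ℕ}

/-- `D_ε(t) = ‖u''(t)‖²/(2ε²)`, as an extended real. -/
def DD (ε : ℝ) (u : Traj n) (t : ℝ) : ℝ≥0∞ := ENNReal.ofReal (‖u.dd t‖ ^ 2 / (2 * ε ^ 2))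

/-- `K_ε(t) = ‖u'(t)‖²/(2ε²)`, the kinetic energy. -/
def KK (ε : ℝ) (u : Traj n) (t : ℝ) : ℝ := ‖u.d t‖ ^ 2 / (2 * ε ^ 2)

/-- `K_ε'(t) = ⟨u'(t),u''(t)⟩/ε²`, the a.e. derivative of the kinetic energy. -/
def KK' (ε : ℝ) (u : Traj n) (t : ℝ) : ℝ := ⟪u.d t, u.dd t⟫ / ε ^ 2

section Defs

variable {W H : Type*} [NormedAddCommGroup W] [NormedSpace ℝ W] [CompleteSpace W]
  [NormedAddCommGroup H] [NormedSpace ℝ H] [CompleteSpace H]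

/-- The Lagrangian `L_ε(t) = D_ε(t) + W_ε(t) + (κ/ε)H_ε(t)`. -/
def LL (P : H1Data n W) (Q : H2Data n H) (κ : ℕ) (ε : ℝ) (u : Traj n) (t : ℝ) : ℝ≥0∞ :=
  DD ε u t + P.G (u.u t) + ((κ : ℝ≥0∞) / ENNReal.ofReal ε) * Q.D (u.d t)

/-- The rescaled functional
`J_ε(u) = ∫₀^∞ e^{-t} [ ‖u''(t)‖²/(2ε²) + G(u(t)) + (κ/ε) D(u'(t)) ] dt`. -/
def Jfun (P : H1Data n W) (Q : H2Data n H) (κ : ℕ) (ε : ℝ) (u : Traj n) : ℝ≥0∞ :=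
  ∫⁻ t in Set.Ioi (0 : ℝ), ENNReal.ofReal (Real.exp (-t)) * LL P Q κ ε u t

/-- The functional
`F_ε(w) = ∫₀^∞ e^{-t/ε} [ (ε²/2)‖w''(t)‖² + G(w(t)) + κ ε D(w'(t)) ] dt`. -/
def Ffun (P : H1Data n W) (Q : H2Data n H) (κ : ℕ) (ε : ℝ) (u : Traj n) : ℝ≥0∞ :=
  ∫⁻ t in Set.Ioi (0 : ℝ), ENNReal.ofReal (Real.exp (-(t / ε))) *
    (ENNReal.ofReal (ε ^ 2 / 2 * ‖u.dd t‖ ^ 2) + P.G (u.u t) +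
      (κ : ℝ≥0∞) * ENNReal.ofReal ε * Q.D (u.d t))

/-- The non-dissipative functional `F_ε` (case `κ = 0`, `D ≡ 0`):
`F_ε(w) = ∫₀^∞ e^{-t/ε} [ (ε²/2)‖w''(t)‖² + G(w(t)) ] dt`. -/
def F0fun (P : H1Data n W) (ε : ℝ) (u : Traj n) : ℝ≥0∞ :=
  ∫⁻ t in Set.Ioi (0 : ℝ), ENNReal.ofReal (Real.exp (-(t / ε))) *
    (ENNReal.ofReal (ε ^ 2 / 2 * ‖u.dd t‖ ^ 2) + P.G (u.u t))

/-- `u` is a minimizer of `J_ε` subject to `u(0) = w₀`, `u'(0) = ε w₁`. -/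
def IsMinJ (P : H1Data n W) (Q : H2Data n H) (κ : ℕ) (ε : ℝ) (w₀ w₁ : L2Space n)
    (u : Traj n) : Prop :=
  u.u 0 = w₀ ∧ u.d 0 = ε • w₁ ∧
    ∀ v : Traj n, v.u 0 = w₀ → v.d 0 = ε • w₁ → Jfun P Q κ ε u ≤ Jfun P Q κ ε v

/-- `w` is a minimizer of `F_ε` subject to `w(0) = w₀`, `w'(0) = w₁`. -/
def IsMinF (P : H1Data n W) (Q : H2Data n H) (κ : ℕ) (ε : ℝ) (w₀ w₁ : L2Space n)
    (u : Traj n) : Prop :=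
  u.u 0 = w₀ ∧ u.d 0 = w₁ ∧
    ∀ v : Traj n, v.u 0 = w₀ → v.d 0 = w₁ → Ffun P Q κ ε u ≤ Ffun P Q κ ε v

/-- `w` is a minimizer of the non-dissipative `F_ε` subject to `w(0) = w₀`, `w'(0) = w₁`. -/
def IsMinF0 (P : H1Data n W) (ε : ℝ) (w₀ w₁ : L2Space n) (u : Traj n) : Prop :=
  u.u 0 = w₀ ∧ u.d 0 = w₁ ∧
    ∀ v : Traj n, v.u 0 = w₀ → v.d 0 = w₁ → F0fun P ε u ≤ F0fun P ε v

/-- The quantity `R(u_ε) = -ε ∫₀^∞ e^{-s} s ⟨∇G(u_ε(s)), w₁⟩ ds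
- κ ∫₀^∞ e^{-s} ⟨∇D(u_ε'(s)), w₁⟩ ds`. -/
def Rquant (P : H1Data n W) (Q : H2Data n H) (κ : ℕ) (ε : ℝ) (u : Traj n)
    (w₁ : W) (w₁H : H) : ℝ :=
  -ε * ∫ s in Set.Ioi (0 : ℝ), Real.exp (-s) * s * P.gradG (u.u s) w₁
    - (κ : ℝ) * ∫ s in Set.Ioi (0 : ℝ), Real.exp (-s) * Q.gradD (u.d s) w₁H

/-- The image of `x ∈ L²` in the dual `W'`, via `⟨x, h⟩ := ⟨x, ιh⟩_{L²}`. -/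
def toDualW (P : H1Data n W) (x : L2Space n) : W →L[ℝ] ℝ :=
  (innerSL ℝ x).comp P.ι

end Defs

/-- The averaging operator `(A f)(s) = ∫_s^∞ e^{-(t-s)} f(t) dt` on nonnegative functions. -/
def Aop (f : ℝ → ℝ≥0∞) (s : ℝ) : ℝ≥0∞ :=
  ∫⁻ t in Set.Ioi s, ENNReal.ofReal (Real.exp (-(t - s))) * f t

/-- The iterated averaging operator `(A² f)(s) = ∫_s^∞ e^{-(t-s)} (t-s) f(t) dt`. -/
def A2op (f : ℝ → ℝ≥0∞) (s : ℝ) : ℝ≥0∞ :=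
  ∫⁻ t in Set.Ioi s, ENNReal.ofReal ((t - s) * Real.exp (-(t - s))) * f t

/-- The averaging operator on signed functions. -/
def AopR (f : ℝ → ℝ) (s : ℝ) : ℝ :=
  ∫ t in Set.Ioi s, Real.exp (-(t - s)) * f t

/-- The iterated averaging operator on signed functions. -/
def A2opR (f : ℝ → ℝ) (s : ℝ) : ℝ :=
  ∫ t in Set.Ioi s, (t - s) * Real.exp (-(t - s)) * f t


/-- `v` is the weak limit of the sequence `w` in `H¹((0,T); L²)` for every `T > 0`
(equivalently, `w i → v` and `w i' → v'` weakly in `L²((0,T); L²)` for every `T > 0`). -/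
def WeakLimL2 {n : ℕ} (w : ℕ → Traj n) (v : Traj1 n) : Prop :=
  ∀ T > (0 : ℝ), ∀ g : ℝ → L2Space n, MemLp g 2 (volume.restrict (Set.Ioc (0 : ℝ) T)) →
    Tendsto (fun i => ∫ t in Set.Ioc (0 : ℝ) T, ⟪(w i).u t, g t⟫) atTop
      (nhds (∫ t in Set.Ioc (0 : ℝ) T, ⟪v.u t, g t⟫)) ∧
    Tendsto (fun i => ∫ t in Set.Ioc (0 : ℝ) T, ⟪(w i).d t, g t⟫) atTop
      (nhds (∫ t in Set.Ioc (0 : ℝ) T, ⟪v.d t, g t⟫))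


section Aux
open Real Set MeasureTheory ENNReal

lemma tri_swap {g h : ℝ → ℝ≥0∞} (hg : Measurable g) (hh : Measurable h) (a b : ℝ) :
    (∫⁻ t in Ioc a b, g t * ∫⁻ s in Ioc a t, h s) =
      ∫⁻ s in Ioc a b, h s * ∫⁻ t in Icc s b, g t := by
  rcases lt_or_ge b a with hab | hab
  · rw [Ioc_eq_empty (not_lt.2 hab.le), Measure.restrict_empty, lintegral_zero_measure,
      lintegral_zero_measure]
  set F : ℝ → ℝ → ℝ≥0∞ := fun t s => if a < s ∧ s ≤ t then g t * h s else 0 with hF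
  have hFm : Measurable (Function.uncurry F) := by
    have hS : MeasurableSet {p : ℝ × ℝ | a < p.2 ∧ p.2 ≤ p.1} :=
      (measurableSet_lt measurable_const measurable_snd).inter
        (measurableSet_le measurable_snd measurable_fst)
    exact Measurable.ite hS ((hg.comp measurable_fst).mul (hh.comp measurable_snd))
      measurable_const
  have step1 : ∀ t, (∫⁻ s, F t s) = g t * ∫⁻ s in Ioc a t, h s := by
    intro t
    have : ∀ s, F t s = (Ioc a t).indicator (fun s => g t * h s) s := by
      intro s
      by_cases hs : a < s ∧ s ≤ t
      · rw [indicator_of_mem (mem_Ioc.2 hs)]; simp [hF, hs]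
      · rw [indicator_of_notMem (fun hmem => hs (mem_Ioc.1 hmem))]; simp [hF, hs]
    simp_rw [this]
    rw [lintegral_indicator measurableSet_Ioc, lintegral_const_mul _ hh]
  have step2 : ∀ s, (∫⁻ t in Ioc a b, F t s) =
      (Ioi a).indicator (fun s => h s * ∫⁻ t in Icc s b, g t) s := by
    intro s
    by_cases hs : a < s
    · rw [indicator_of_mem (mem_Ioi.2 hs)]
      have : ∀ t, F t s = (Ici s).indicator (fun t => g t * h s) t := by
        intro t
        by_cases hts : s ≤ t
        · rw [indicator_of_mem (mem_Ici.2 hts)]; simp [hF, hs, hts]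
        · rw [indicator_of_notMem (fun hmem => hts (mem_Ici.1 hmem))]; simp [hF, hts]
      simp_rw [this]
      rw [lintegral_indicator measurableSet_Ici, Measure.restrict_restrict measurableSet_Ici]
      have hset : Ici s ∩ Ioc a b = Icc s b := by
        ext t; simp only [mem_inter_iff, mem_Ici, mem_Ioc, mem_Icc]
        exact ⟨fun ⟨h1, _, h3⟩ => ⟨h1, h3⟩, fun ⟨h1, h2⟩ => ⟨h1, lt_of_lt_of_le hs h1, h2⟩⟩
      rw [hset, lintegral_mul_const _ hg, mul_comm]
    · rw [indicator_of_notMem (fun hmem => hs (mem_Ioi.1 hmem))]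
      have : ∀ t, F t s = 0 := by intro t; simp [hF, hs]
      simp_rw [this]; simp
  calc (∫⁻ t in Ioc a b, g t * ∫⁻ s in Ioc a t, h s)
      = ∫⁻ t in Ioc a b, ∫⁻ s, F t s := by simp_rw [step1]
    _ = ∫⁻ s, ∫⁻ t in Ioc a b, F t s := lintegral_lintegral_swap hFm.aemeasurable
    _ = ∫⁻ s, (Ioi a).indicator (fun s => h s * ∫⁻ t in Icc s b, g t) s := by simp_rw [step2]
    _ = ∫⁻ s in Ioi a, h s * ∫⁻ t in Icc s b, g t := lintegral_indicator measurableSet_Ioi _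
    _ = ∫⁻ s in Ioc a b, h s * ∫⁻ t in Icc s b, g t := by
        rw [← Ioc_union_Ioi_eq_Ioi hab, lintegral_union measurableSet_Ioi
          (by rw [Set.disjoint_left]; intro x hx hx'; exact absurd hx.2 (not_le.2 hx'))]
        have : (∫⁻ s in Ioi b, h s * ∫⁻ t in Icc s b, g t) =
            ∫⁻ s in Ioi b, (0:ℝ≥0∞) := by
          apply setLIntegral_congr_fun measurableSet_Ioi
          exact fun s hs => by
            rw [Icc_eq_empty (not_le.2 hs), Measure.restrict_empty, lintegral_zero_measure,
              mul_zero]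
        rw [this, lintegral_zero, add_zero]

lemma lint_exp (s : ℝ) :
    ∫⁻ t in Ioi s, ENNReal.ofReal (Real.exp (-t)) = ENNReal.ofReal (Real.exp (-s)) := by
  rw [← ofReal_integral_eq_lintegral_ofReal, integral_exp_neg_Ioi]
  · simpa [IntegrableOn] using exp_neg_integrableOn_Ioi s one_pos
  · exact Filter.Eventually.of_forall fun x => (Real.exp_pos _).le

lemma amgm_ennreal (a b : ℝ≥0∞) : 2*(a*b) ≤ 8*a^2 + b^2/2 := by
  rcases le_total b (4*a) with h | h
  · calc 2*(a*b) ≤ 2*(a*(4*a)) := by gcongr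
    _ = 8*a^2 := by ring
    _ ≤ 8*a^2 + b^2/2 := le_self_add
  · have ha : a ≤ b/4 := ENNReal.le_div_iff_mul_le (by norm_num) (by norm_num) |>.2 (by rwa [mul_comm])
    calc 2*(a*b) ≤ 2*((b/4)*b) := by gcongr
    _ = b^2/2 := by
        rw [div_eq_mul_inv, div_eq_mul_inv, pow_two]
        calc 2*(b*4⁻¹*b) = (b*b)*(2*4⁻¹) := by ring
        _ = (b*b)*2⁻¹ := by
            congr 1
            rw [show (4:ℝ≥0∞) = 2*2 by norm_num, ENNReal.mul_inv (by norm_num) (by norm_num),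
              ← mul_assoc, ENNReal.mul_inv_cancel (by norm_num) (by norm_num), one_mul]
    _ ≤ _ := le_add_self

lemma hardy {f : ℝ → ℝ≥0∞} (hf : Measurable f)
    (hfin : ∀ T : ℝ, (∫⁻ s in Ioc (0:ℝ) T, f s) < ⊤) :
    (∫⁻ t in Ioi (0:ℝ), ENNReal.ofReal (Real.exp (-t)) * (∫⁻ s in Ioc (0:ℝ) t, f s)^2)
      ≤ 16 * ∫⁻ s in Ioi (0:ℝ), ENNReal.ofReal (Real.exp (-s)) * (f s)^2 := by
  set E : ℝ → ℝ≥0∞ := fun t => ENNReal.ofReal (Real.exp (-t)) with hEdef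
  have hE : Measurable E := (Real.continuous_exp.comp continuous_neg).measurable.ennreal_ofReal
  set Φ : ℝ → ℝ≥0∞ := fun t => ∫⁻ s in Ioc (0:ℝ) t, f s with hΦdef
  have hΦmono : Monotone Φ := fun x y hxy => lintegral_mono_set (Ioc_subset_Ioc_right hxy)
  have hΦm : Measurable Φ := hΦmono.measurable
  set R := ∫⁻ s in Ioi (0:ℝ), E s * (f s)^2 with hRdef
  have hE1 : ∀ t, 0 < t → E t ≤ 1 := by
    intro t ht
    have : Real.exp (-t) ≤ 1 := Real.exp_le_one_iff.2 (by linarith)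
    exact ENNReal.ofReal_le_one.2 this
  -- key pointwise bound
  have key : ∀ t, Φ t ^ 2 ≤ 2 * ∫⁻ s in Ioc (0:ℝ) t, f s * Φ s := by
    intro t
    have h1 : Φ t ^ 2 = ∫⁻ s in Ioc (0:ℝ) t, f s * Φ t := by
      rw [lintegral_mul_const _ hf, pow_two]
    have h2 : ∀ᵐ s ∂volume, s ∈ Ioc (0:ℝ) t →
        f s * Φ t = f s * Φ s + f s * ∫⁻ r in Ioc s t, f r := by
      refine Filter.Eventually.of_forall fun s hs => ?_
      have hsplit : Φ t = Φ s + ∫⁻ r in Ioc s t, f r := by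
        rw [hΦdef]
        simp only
        rw [← lintegral_union measurableSet_Ioc (Ioc_disjoint_Ioc_of_le le_rfl),
          Ioc_union_Ioc_eq_Ioc hs.1.le hs.2]
      rw [hsplit, mul_add]
    rw [h1, setLIntegral_congr_fun_ae measurableSet_Ioc h2, lintegral_add_left (f := fun s => f s * Φ s) (hf.mul hΦm)]
    have h3 : (∫⁻ s in Ioc (0:ℝ) t, f s * ∫⁻ r in Ioc s t, f r) ≤
        ∫⁻ s in Ioc (0:ℝ) t, f s * Φ s := by
      calc (∫⁻ s in Ioc (0:ℝ) t, f s * ∫⁻ r in Ioc s t, f r)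
          ≤ ∫⁻ s in Ioc (0:ℝ) t, f s * ∫⁻ r in Icc s t, f r :=
            lintegral_mono fun s => mul_le_mul_right (lintegral_mono_set Ioc_subset_Icc_self) _
        _ = ∫⁻ r in Ioc (0:ℝ) t, f r * ∫⁻ s in Ioc (0:ℝ) r, f s := (tri_swap hf hf 0 t).symm
        _ = ∫⁻ s in Ioc (0:ℝ) t, f s * Φ s := rfl
    calc (∫⁻ s in Ioc (0:ℝ) t, f s * Φ s) + ∫⁻ s in Ioc (0:ℝ) t, f s * ∫⁻ r in Ioc s t, f r
        ≤ (∫⁻ s in Ioc (0:ℝ) t, f s * Φ s) + ∫⁻ s in Ioc (0:ℝ) t, f s * Φ s :=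
          add_le_add_right h3 _
      _ = 2 * ∫⁻ s in Ioc (0:ℝ) t, f s * Φ s := (two_mul _).symm
  -- truncated estimate
  have truncated : ∀ T : ℝ, (∫⁻ t in Ioc (0:ℝ) T, E t * Φ t ^ 2) ≤ 16 * R := by
    intro T
    set LT := ∫⁻ t in Ioc (0:ℝ) T, E t * Φ t ^ 2 with hLT
    have hLTfin : LT < ⊤ := by
      have hb : LT ≤ Φ T ^ 2 * volume (Ioc (0:ℝ) T) := by
        rw [← setLIntegral_const (Ioc (0:ℝ) T) (Φ T ^ 2)]
        refine setLIntegral_mono' measurableSet_Ioc fun t ht => ?_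
        calc E t * Φ t ^ 2 ≤ 1 * Φ T ^ 2 :=
              mul_le_mul' (hE1 t ht.1) (pow_le_pow_left' (hΦmono ht.2) 2)
          _ = Φ T ^ 2 := one_mul _
      refine lt_of_le_of_lt hb (ENNReal.mul_lt_top ?_ measure_Ioc_lt_top)
      rw [pow_two]
      exact ENNReal.mul_lt_top (hfin T) (hfin T)
    have step : LT ≤ 8*R + LT/2 := by
      calc LT ≤ ∫⁻ t in Ioc (0:ℝ) T, E t * (2 * ∫⁻ s in Ioc (0:ℝ) t, f s * Φ s) :=
            lintegral_mono fun t => mul_le_mul_right (key t) _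
        _ = 2 * ∫⁻ t in Ioc (0:ℝ) T, E t * ∫⁻ s in Ioc (0:ℝ) t, f s * Φ s := by
            simp_rw [show ∀ x y : ℝ≥0∞, x*(2*y) = 2*(x*y) from fun x y => by ring]
            rw [lintegral_const_mul' 2 _ ENNReal.ofNat_ne_top]
        _ = 2 * ∫⁻ s in Ioc (0:ℝ) T, (f s * Φ s) * ∫⁻ t in Icc s T, E t := by
            rw [tri_swap (h := fun s => f s * Φ s) hE (hf.mul hΦm)]
        _ ≤ 2 * ∫⁻ s in Ioc (0:ℝ) T, (f s * Φ s) * E s := by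
            refine mul_le_mul_right (lintegral_mono fun s => mul_le_mul_right ?_ _) _
            calc (∫⁻ t in Icc s T, E t) ≤ ∫⁻ t in Ici s, E t :=
                  lintegral_mono_set Icc_subset_Ici_self
              _ = ∫⁻ t in Ioi s, E t := by
                  rw [Measure.restrict_congr_set Ioi_ae_eq_Ici.symm]
              _ = E s := lint_exp s
        _ = ∫⁻ s in Ioc (0:ℝ) T, 2 * ((f s * Φ s) * E s) := by
            rw [lintegral_const_mul' 2 _ ENNReal.ofNat_ne_top]
        _ ≤ ∫⁻ s in Ioc (0:ℝ) T, (8 * f s ^ 2 * E s + (Φ s ^ 2 / 2) * E s) := by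
            refine lintegral_mono fun s => ?_
            calc 2 * ((f s * Φ s) * E s) = (2 * (f s * Φ s)) * E s := by ring
              _ ≤ (8 * f s ^ 2 + Φ s ^ 2 / 2) * E s :=
                  mul_le_mul_left (amgm_ennreal _ _) _
              _ = 8 * f s ^ 2 * E s + (Φ s ^ 2 / 2) * E s := by ring
        _ = 8 * (∫⁻ s in Ioc (0:ℝ) T, E s * f s ^ 2) +
              (∫⁻ s in Ioc (0:ℝ) T, E s * Φ s ^ 2) / 2 := by
            rw [lintegral_add_left (by fun_prop)]
            congr 1
            · simp_rw [show ∀ s, 8 * f s ^ 2 * E s = 8 * (E s * f s^2) from fun s => by ring]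
              rw [lintegral_const_mul' 8 _ (by norm_num)]
            · simp_rw [show ∀ s, (Φ s ^ 2/2) * E s = 2⁻¹ * (E s * Φ s^2) from fun s => by
                rw [div_eq_mul_inv]; ring]
              rw [lintegral_const_mul' 2⁻¹ _ (by norm_num), ENNReal.div_eq_inv_mul]
        _ ≤ 8*R + LT/2 := by
            gcongr
            · exact lintegral_mono_set Ioc_subset_Ioi_self
    have half : LT/2 ≤ 8*R := by
      have h := step
      conv_lhs at h => rw [← ENNReal.add_halves LT]
      exact (ENNReal.add_le_add_iff_right
        (ENNReal.div_lt_top hLTfin.ne (by norm_num)).ne).1 h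
    calc LT = LT/2 + LT/2 := (ENNReal.add_halves LT).symm
      _ ≤ 8*R + 8*R := add_le_add half half
      _ = 16*R := by ring
  -- pass to the limit
  have hfun_m : Measurable fun t => E t * Φ t ^ 2 := hE.mul (hΦm.pow_const 2)
  have hsup : (∫⁻ t in Ioi (0:ℝ), E t * Φ t ^ 2) =
      ⨆ m : ℕ, ∫⁻ t in Ioc (0:ℝ) (m:ℝ), E t * Φ t ^ 2 := by
    rw [← lintegral_indicator measurableSet_Ioi]
    simp_rw [← lintegral_indicator measurableSet_Ioc]
    rw [← lintegral_iSup (fun m => hfun_m.indicator measurableSet_Ioc)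
      (fun i j hij => indicator_le_indicator_of_subset
        (Ioc_subset_Ioc_right (Nat.cast_le.2 hij)) (fun _ => bot_le))]
    congr 1
    funext x
    rcases lt_or_ge 0 x with hx | hx
    · obtain ⟨m, hm⟩ := exists_nat_ge x
      refine le_antisymm (le_iSup_of_le m (le_of_eq ?_))
        (iSup_le fun k =>
          indicator_le_indicator_of_subset Ioc_subset_Ioi_self (fun _ => bot_le) x)
      rw [indicator_of_mem (mem_Ioc.2 ⟨hx, hm⟩), indicator_of_mem (mem_Ioi.2 hx)]
    · have h1 : ∀ m : ℕ, (Ioc (0:ℝ) (m:ℝ)).indicator (fun t => E t * Φ t ^2) x = 0 :=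
        fun m => indicator_of_notMem (fun hmem => absurd (mem_Ioc.1 hmem).1 (not_lt.2 hx)) _
      simp [h1, indicator_of_notMem (fun hmem => absurd (mem_Ioi.1 hmem) (not_lt.2 hx))]
  rw [hsup]
  exact iSup_le fun m => truncated m

end Aux

set_option maxHeartbeats 2000000 in
set_option synthInstance.maxHeartbeats 1000000 in
/-- Lemma 3.3: basic estimates on minimizers of `J_ε`. -/
theorem statement_1 {n : ℕ} {W H : Type*}
    [NormedAddCommGroup W] [NormedSpace ℝ W] [CompleteSpace W]
    [NormedAddCommGroup H] [NormedSpace ℝ H] [CompleteSpace H]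
    (P : H1Data n W) (Q : H2Data n H) (κ : ℕ) (hκ : κ = 0 ∨ κ = 1)
    (hD0 : κ = 0 → ∀ x : L2Space n, Q.D x = 0)
    (w₀ w₁ : W) (hw₁H : κ = 1 → P.ι w₁ ∈ Set.range Q.ιH) :
    ∃ C : ℝ, 0 ≤ C ∧ ∀ ε ∈ Set.Ioo (0 : ℝ) 1, ∀ u : Traj n,
      IsMinJ P Q κ ε (P.ι w₀) (P.ι w₁) u →
      (∫⁻ t in Set.Ioi (0 : ℝ), ENNReal.ofReal (Real.exp (-t)) * DD ε u t) ≤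
        ENNReal.ofReal C ∧
      (∫⁻ t in Set.Ioi (0 : ℝ),
          ENNReal.ofReal (Real.exp (-t)) * ENNReal.ofReal (KK ε u t)) ≤
        ENNReal.ofReal C := by
  classical
  -- pick a representative of `w₁` in `H` (only meaningful when κ = 1)
  obtain ⟨w₁H, hw₁H'⟩ : ∃ y : H, κ = 1 → P.ι w₁ = Q.ιH y := by
    rcases hκ with h0 | h1
    · exact ⟨0, fun h => absurd (h0 ▸ h) (by omega)⟩
    · obtain ⟨y, hy⟩ := hw₁H h1
      exact ⟨y, fun _ => hy.symm⟩
  have hB₀ : 0 ≤ Q.B w₁H w₁H := Q.B_nonneg _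
  -- continuity of δ ↦ G(ι(w₀ + δ w₁)) and a bound on [0,1]
  have hgc : Continuous (fun δ : ℝ => (P.G (P.ι (w₀ + δ • w₁))).toReal) := by
    rw [continuous_iff_continuousAt]
    intro δ₀
    have h0 := (P.hgrad (w₀ + δ₀ • w₁) w₁).continuousAt
    have heq : (fun δ : ℝ => (P.G (P.ι (w₀ + δ • w₁))).toReal) =
        (fun δ : ℝ => (P.G (P.ι ((w₀ + δ₀ • w₁) + δ • w₁))).toReal) ∘ (fun δ => δ - δ₀) := by
      funext δ
      simp only [Function.comp_apply]
      congr 3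
      rw [sub_smul]; abel
    rw [heq]
    have hsub : ContinuousAt (fun δ : ℝ => δ - δ₀) δ₀ :=
      (continuous_id.sub continuous_const).continuousAt
    have h0' : ContinuousAt (fun δ : ℝ => (P.G (P.ι ((w₀ + δ₀ • w₁) + δ • w₁))).toReal)
        ((fun δ : ℝ => δ - δ₀) δ₀) := by simpa using h0
    exact ContinuousAt.comp (f := fun δ : ℝ => δ - δ₀) h0' hsub
  obtain ⟨δm, hδm, hmax⟩ := (isCompact_Icc : IsCompact (Set.Icc (0:ℝ) 1)).exists_isMaxOn
    ⟨0, by norm_num⟩ hgc.continuousOn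
  set M : ℝ := max ((P.G (P.ι (w₀ + δm • w₁))).toReal) 0 with hMdef
  have hM : ∀ δ ∈ Set.Icc (0:ℝ) 1, (P.G (P.ι (w₀ + δ • w₁))).toReal ≤ M :=
    fun δ hδ => (hmax hδ).trans (le_max_left _ _)
  have hM0 : (0:ℝ) ≤ M := le_max_right _ _
  set C₀ : ℝ := ‖P.ι w₁‖^2/2 + M + Q.B w₁H w₁H/2 with hC₀def
  have hC₀ : 0 ≤ C₀ := by
    have := sq_nonneg ‖P.ι w₁‖
    rw [hC₀def]; positivity
  refine ⟨‖P.ι w₁‖^2 + 33*C₀, by positivity, ?_⟩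
  intro ε hε u humin
  obtain ⟨hu0, hd0, hmin⟩ := humin
  have hε0 : (0:ℝ) < ε := hε.1
  have hε1 : ε < 1 := hε.2
  have hexp : Continuous fun t : ℝ => Real.exp (-t) := Real.continuous_exp.comp continuous_neg
  have hEm : Measurable fun t : ℝ => ENNReal.ofReal (Real.exp (-t)) :=
    hexp.measurable.ennreal_ofReal
  have hcd : Continuous fun t : ℝ => (ε * Real.exp (-t)) • (P.ι w₁) :=
    (continuous_const.mul hexp).smul continuous_const
  have hcdd : Continuous fun t : ℝ => (-(ε * Real.exp (-t))) • (P.ι w₁) :=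
    ((continuous_const.mul hexp).neg).smul continuous_const
  have hderiv : ∀ s : ℝ, HasDerivAt (fun r : ℝ => ε * Real.exp (-r)) (-(ε * Real.exp (-s))) s := by
    intro s
    have h1 : HasDerivAt (fun r : ℝ => -r) (-1) s := (hasDerivAt_id s).neg
    have h2 := (Real.hasDerivAt_exp (-s)).comp s h1
    have h3 := h2.const_mul ε
    refine h3.congr_deriv ?_
    ring
  -- the competitor trajectory
  obtain ⟨v, hvu, hvd, hvdd⟩ : ∃ v : Traj n,
      (∀ t, v.u t = P.ι w₀ + (ε * (1 - Real.exp (-t))) • (P.ι w₁)) ∧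
      (∀ t, v.d t = (ε * Real.exp (-t)) • (P.ι w₁)) ∧
      (∀ t, v.dd t = (-(ε * Real.exp (-t))) • (P.ι w₁)) := by
    refine ⟨⟨fun t => P.ι w₀ + (ε * (1 - Real.exp (-t))) • (P.ι w₁),
            fun t => (ε * Real.exp (-t)) • (P.ι w₁),
            fun t => (-(ε * Real.exp (-t))) • (P.ι w₁), ?_, ?_, ?_, ?_, ?_⟩,
          fun _ => rfl, fun _ => rfl, fun _ => rfl⟩
    · intro T hT
      haveI : IsFiniteMeasure (volume.restrict (Set.Ioc (0:ℝ) T)) :=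
        ⟨by rw [Measure.restrict_apply_univ]; exact measure_Ioc_lt_top⟩
      refine MemLp.of_bound hcdd.aestronglyMeasurable (ε * ‖P.ι w₁‖) ?_
      filter_upwards [self_mem_ae_restrict measurableSet_Ioc] with t ht
      rw [norm_smul, Real.norm_eq_abs, abs_neg, abs_mul, abs_of_pos hε0,
        abs_of_pos (Real.exp_pos _)]
      have h1 : Real.exp (-t) ≤ 1 := Real.exp_le_one_iff.2 (by linarith [ht.1])
      nlinarith [mul_nonneg (mul_nonneg hε0.le (sub_nonneg.2 h1)) (norm_nonneg (P.ι w₁))]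
    · exact fun T _ => hcdd.intervalIntegrable 0 T
    · exact fun T _ => hcd.intervalIntegrable 0 T
    · intro t _
      simp only [neg_zero, Real.exp_zero, mul_one]
      rw [intervalIntegral.integral_smul_const,
        intervalIntegral.integral_eq_sub_of_hasDerivAt (fun s _ => hderiv s)
          (((continuous_const.mul hexp).neg).intervalIntegrable 0 t)]
      simp only [neg_zero, Real.exp_zero, mul_one]
      rw [← add_smul, show ε + (ε * Real.exp (-t) - ε) = ε * Real.exp (-t) from by ring]
    · intro t _
      have hderiv2 : ∀ s : ℝ,
          HasDerivAt (fun r : ℝ => ε * (1 - Real.exp (-r))) (ε * Real.exp (-s)) s := by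
        intro s
        have h := ((hderiv s).neg).const_add ε
        have heq2 : (fun r : ℝ => ε * (1 - Real.exp (-r))) =
            fun r => ε + -(ε * Real.exp (-r)) := by funext r; ring
        rw [heq2]
        simpa using h
      simp only [neg_zero, Real.exp_zero, sub_self, mul_zero, zero_smul, add_zero]
      rw [intervalIntegral.integral_smul_const,
        intervalIntegral.integral_eq_sub_of_hasDerivAt (fun s _ => hderiv2 s)
          ((continuous_const.mul hexp).intervalIntegrable 0 t)]
      simp only [neg_zero, Real.exp_zero, sub_self, mul_zero, sub_zero]
  have hv0 : v.u 0 = P.ι w₀ := by rw [hvu]; simp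
  have hvd0 : v.d 0 = ε • (P.ι w₁) := by rw [hvd]; simp
  -- the Lagrangian of the competitor is bounded by C₀
  have hLLv : ∀ t ∈ Set.Ioi (0:ℝ), LL P Q κ ε v t ≤ ENNReal.ofReal C₀ := by
    intro t ht
    have ht' : (0:ℝ) < t := ht
    have hexp1 : Real.exp (-t) ≤ 1 := Real.exp_le_one_iff.2 (by linarith)
    have hexpos : (0:ℝ) < Real.exp (-t) := Real.exp_pos _
    have b1 : DD ε v t ≤ ENNReal.ofReal (‖P.ι w₁‖^2/2) := by
      simp only [DD, hvdd]
      apply ENNReal.ofReal_le_ofReal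
      rw [norm_smul, Real.norm_eq_abs, abs_neg, abs_mul, abs_of_pos hε0, abs_of_pos hexpos,
        div_le_div_iff₀ (by positivity) (by norm_num)]
      have he2 : Real.exp (-t)^2 ≤ 1 := by nlinarith
      nlinarith [mul_nonneg (sq_nonneg (‖P.ι w₁‖ * ε)) (sub_nonneg.2 he2)]
    have b2 : P.G (v.u t) ≤ ENNReal.ofReal M := by
      have hvut : v.u t = P.ι (w₀ + (ε * (1 - Real.exp (-t))) • w₁) := by
        rw [hvu, map_add, _root_.map_smul]
      have hδmem : ε * (1 - Real.exp (-t)) ∈ Set.Icc (0:ℝ) 1 :=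
        ⟨by nlinarith, by nlinarith⟩
      have hfin : P.G (P.ι (w₀ + (ε * (1 - Real.exp (-t))) • w₁)) ≠ ⊤ :=
        ((P.domain _).2 ⟨_, rfl⟩).ne
      rw [hvut, ← ENNReal.ofReal_toReal hfin]
      exact ENNReal.ofReal_le_ofReal (hM _ hδmem)
    have b3 : (κ : ℝ≥0∞)/ENNReal.ofReal ε * Q.D (v.d t) ≤
        ENNReal.ofReal (Q.B w₁H w₁H/2) := by
      rcases hκ with h0 | h1
      · rw [h0]; simp
      · have hvdt : v.d t = Q.ιH ((ε * Real.exp (-t)) • w₁H) := by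
          rw [hvd, _root_.map_smul, ← hw₁H' h1]
        rw [h1, hvdt, Q.D_eq, Nat.cast_one]
        have hB : Q.B ((ε * Real.exp (-t)) • w₁H) ((ε * Real.exp (-t)) • w₁H)
            = (ε * Real.exp (-t))^2 * Q.B w₁H w₁H := by
          rw [ContinuousLinearMap.map_smul₂, _root_.map_smul, smul_eq_mul, smul_eq_mul]
          ring
        rw [hB]
        calc (1:ℝ≥0∞)/ENNReal.ofReal ε *
              ENNReal.ofReal ((ε * Real.exp (-t))^2 * Q.B w₁H w₁H / 2)
            = ENNReal.ofReal (((ε * Real.exp (-t))^2 * Q.B w₁H w₁H / 2) / ε) := by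
              rw [ENNReal.ofReal_div_of_pos hε0, one_div, ENNReal.div_eq_inv_mul]
          _ ≤ ENNReal.ofReal (Q.B w₁H w₁H/2) := by
              apply ENNReal.ofReal_le_ofReal
              rw [div_le_iff₀ hε0]
              have he2 : Real.exp (-t)^2 ≤ 1 := by nlinarith
              have h1 : ε^2 * Real.exp (-t)^2 ≤ ε := by
                nlinarith [mul_nonneg (mul_nonneg hε0.le hε0.le) (sub_nonneg.2 he2),
                  mul_nonneg hε0.le (sub_nonneg.2 hε1.le)]
              nlinarith [mul_nonneg (sub_nonneg.2 h1) hB₀]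
    calc LL P Q κ ε v t ≤ ENNReal.ofReal (‖P.ι w₁‖^2/2) + ENNReal.ofReal M +
          ENNReal.ofReal (Q.B w₁H w₁H/2) := add_le_add (add_le_add b1 b2) b3
      _ = ENNReal.ofReal C₀ := by
          rw [← ENNReal.ofReal_add (by positivity) hM0,
            ← ENNReal.ofReal_add (by positivity) (by positivity), hC₀def]
  -- J(u) ≤ J(v) ≤ C₀
  have hJv : Jfun P Q κ ε v ≤ ENNReal.ofReal C₀ := by
    calc Jfun P Q κ ε v
        ≤ ∫⁻ t in Set.Ioi (0:ℝ), ENNReal.ofReal (Real.exp (-t)) * ENNReal.ofReal C₀ := by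
          unfold Jfun
          refine lintegral_mono_ae ?_
          filter_upwards [self_mem_ae_restrict measurableSet_Ioi] with t ht
          exact mul_le_mul_right (hLLv t ht) _
      _ = ENNReal.ofReal C₀ := by
          rw [lintegral_mul_const' _ _ ENNReal.ofReal_ne_top, lint_exp, neg_zero,
            Real.exp_zero, ENNReal.ofReal_one, one_mul]
  have hJu : Jfun P Q κ ε u ≤ ENNReal.ofReal C₀ := le_trans (hmin v hv0 hvd0) hJv
  have hDDle : (∫⁻ t in Set.Ioi (0:ℝ), ENNReal.ofReal (Real.exp (-t)) * DD ε u t)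
      ≤ ENNReal.ofReal C₀ := by
    refine le_trans ?_ hJu
    unfold Jfun LL
    exact lintegral_mono fun t => mul_le_mul_right (le_trans le_self_add le_self_add) _
  constructor
  · refine hDDle.trans (ENNReal.ofReal_le_ofReal ?_)
    nlinarith [sq_nonneg ‖P.ι w₁‖]
  -- kinetic estimate
  have hddm : AEStronglyMeasurable u.dd (volume.restrict (Set.Ioi (0:ℝ))) := by
    have hun : Set.Ioi (0:ℝ) = ⋃ m : ℕ, Set.Ioc (0:ℝ) ((m:ℝ)+1) := by
      ext x
      simp only [Set.mem_Ioi, Set.mem_iUnion, Set.mem_Ioc]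
      constructor
      · intro hx
        obtain ⟨m, hm⟩ := exists_nat_ge x
        exact ⟨m, hx, by linarith⟩
      · rintro ⟨m, h1, -⟩; exact h1
    rw [hun, aestronglyMeasurable_iUnion_iff]
    exact fun m => (u.memL2 ((m:ℝ)+1) (by positivity)).aestronglyMeasurable
  set f' : ℝ → L2Space n := hddm.mk u.dd with hf'def
  have hf'ae : u.dd =ᵐ[volume.restrict (Set.Ioi (0:ℝ))] f' := hddm.ae_eq_mk
  have hf'm : Measurable fun s => ENNReal.ofReal ‖f' s‖ :=
    hddm.stronglyMeasurable_mk.norm.measurable.ennreal_ofReal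
  have hint : ∀ t : ℝ, 0 < t → IntegrableOn (fun s => ‖f' s‖) (Set.Ioc (0:ℝ) t) volume := by
    intro t ht
    have h1 : IntegrableOn u.dd (Set.Ioc (0:ℝ) t) volume :=
      (intervalIntegrable_iff_integrableOn_Ioc_of_le ht.le).1 (u.int_dd t ht)
    exact (h1.congr (ae_restrict_of_ae_restrict_of_subset Set.Ioc_subset_Ioi_self hf'ae)).norm
  have hfin : ∀ T : ℝ, (∫⁻ s in Set.Ioc (0:ℝ) T, ENNReal.ofReal ‖f' s‖) < ⊤ := by
    intro T
    rcases le_or_gt T 0 with hT | hT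
    · rw [Set.Ioc_eq_empty (not_lt.2 hT)]; simp
    · have h2 := (hint T hT).hasFiniteIntegral
      rwa [hasFiniteIntegral_iff_ofReal (Filter.Eventually.of_forall fun s => norm_nonneg _)]
        at h2
  have hHardy := hardy hf'm hfin
  -- pointwise bound on the kinetic term
  have hptwise : ∀ t ∈ Set.Ioi (0:ℝ),
      ENNReal.ofReal (Real.exp (-t)) * ENNReal.ofReal (KK ε u t) ≤
      ENNReal.ofReal (Real.exp (-t)) * (ENNReal.ofReal (‖P.ι w₁‖^2) +
        (∫⁻ s in Set.Ioc (0:ℝ) t, ENNReal.ofReal ‖f' s‖)^2 * (ENNReal.ofReal (ε^2))⁻¹) := by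
    intro t ht
    have ht' : (0:ℝ) < t := ht
    refine mul_le_mul_right ?_ _
    set It := ∫ s in (0:ℝ)..t, ‖u.dd s‖ with hItdef
    have hItnn : 0 ≤ It :=
      intervalIntegral.integral_nonneg ht'.le (fun s _ => norm_nonneg _)
    have hnorm : ‖u.d t‖ ≤ ε * ‖P.ι w₁‖ + It := by
      rw [u.hd t ht'.le]
      refine le_trans (norm_add_le _ _) ?_
      have h1 : ‖u.d 0‖ = ε * ‖P.ι w₁‖ := by
        rw [hd0, norm_smul, Real.norm_eq_abs, abs_of_pos hε0]
      have h2 : ‖∫ s in (0:ℝ)..t, u.dd s‖ ≤ It :=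
        intervalIntegral.norm_integral_le_integral_norm ht'.le
      rw [h1]
      exact add_le_add_right h2 _
    have hKK : KK ε u t ≤ ‖P.ι w₁‖^2 + It^2/ε^2 := by
      have hsq : ‖u.d t‖^2 ≤ (ε * ‖P.ι w₁‖ + It)^2 :=
        pow_le_pow_left₀ (norm_nonneg _) hnorm 2
      have key2 : ‖u.d t‖^2 ≤ 2*ε^2*‖P.ι w₁‖^2 + 2*It^2 := by
        nlinarith [sq_nonneg (ε * ‖P.ι w₁‖ - It)]
      calc KK ε u t = ‖u.d t‖^2/(2*ε^2) := rfl
        _ ≤ (2*ε^2*‖P.ι w₁‖^2 + 2*It^2)/(2*ε^2) := by gcongr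
        _ = ‖P.ι w₁‖^2 + It^2/ε^2 := by field_simp
    calc ENNReal.ofReal (KK ε u t)
        ≤ ENNReal.ofReal (‖P.ι w₁‖^2 + It^2/ε^2) := ENNReal.ofReal_le_ofReal hKK
      _ ≤ ENNReal.ofReal (‖P.ι w₁‖^2) + ENNReal.ofReal (It^2/ε^2) := ENNReal.ofReal_add_le
      _ ≤ _ := by
        refine add_le_add_right ?_ _
        rw [ENNReal.ofReal_div_of_pos (by positivity), div_eq_mul_inv]
        refine mul_le_mul' ?_ le_rfl
        rw [ENNReal.ofReal_pow hItnn]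
        refine pow_le_pow_left' ?_ 2
        have hae2 : (fun s => ‖u.dd s‖)
            =ᵐ[volume.restrict (Set.Ioc (0:ℝ) t)] (fun s => ‖f' s‖) :=
          (ae_restrict_of_ae_restrict_of_subset Set.Ioc_subset_Ioi_self hf'ae).mono
            fun x hx => congrArg norm hx
        rw [hItdef, intervalIntegral.integral_of_le ht'.le, integral_congr_ae hae2,
          ofReal_integral_eq_lintegral_ofReal (hint t ht')
            (Filter.Eventually.of_forall fun s => norm_nonneg _)]
  -- the `R` quantity is controlled by the second-derivative bound
  have hRψ : (∫⁻ s in Set.Ioi (0:ℝ),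
      ENNReal.ofReal (Real.exp (-s)) * (ENNReal.ofReal ‖f' s‖)^2)
      ≤ ENNReal.ofReal (2*ε^2) * ENNReal.ofReal C₀ := by
    have hcong : ∀ᵐ s ∂(volume.restrict (Set.Ioi (0:ℝ))),
        ENNReal.ofReal (Real.exp (-s)) * (ENNReal.ofReal ‖f' s‖)^2 =
        ENNReal.ofReal (2*ε^2) * (ENNReal.ofReal (Real.exp (-s)) * DD ε u s) := by
      filter_upwards [hf'ae] with s hs
      rw [← hs, ← ENNReal.ofReal_pow (norm_nonneg _)]
      simp only [DD]
      have hh : (2*ε^2) * (‖u.dd s‖^2/(2*ε^2)) = ‖u.dd s‖^2 := by field_simp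
      calc ENNReal.ofReal (Real.exp (-s)) * ENNReal.ofReal (‖u.dd s‖^2)
          = ENNReal.ofReal (Real.exp (-s)) *
            ENNReal.ofReal ((2*ε^2) * (‖u.dd s‖^2/(2*ε^2))) := by rw [hh]
        _ = ENNReal.ofReal (Real.exp (-s)) * (ENNReal.ofReal (2*ε^2) *
            ENNReal.ofReal (‖u.dd s‖^2/(2*ε^2))) := by
            rw [ENNReal.ofReal_mul (by positivity)]
        _ = ENNReal.ofReal (2*ε^2) * (ENNReal.ofReal (Real.exp (-s)) *
            ENNReal.ofReal (‖u.dd s‖^2/(2*ε^2))) := by ring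
    rw [lintegral_congr_ae hcong, lintegral_const_mul' _ _ ENNReal.ofReal_ne_top]
    exact mul_le_mul_right hDDle _
  -- put everything together
  have hinvne : (ENNReal.ofReal (ε^2))⁻¹ ≠ ⊤ :=
    ENNReal.inv_ne_top.2 (ENNReal.ofReal_pos.2 (by positivity)).ne'
  have hcancel : (ENNReal.ofReal (ε^2))⁻¹ * ENNReal.ofReal (ε^2) = 1 :=
    ENNReal.inv_mul_cancel (ENNReal.ofReal_pos.2 (by positivity)).ne' ENNReal.ofReal_ne_top
  have hkin : (∫⁻ t in Set.Ioi (0:ℝ),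
      ENNReal.ofReal (Real.exp (-t)) * ENNReal.ofReal (KK ε u t))
      ≤ ENNReal.ofReal (‖P.ι w₁‖^2) + 32 * ENNReal.ofReal C₀ := by
    have hstep1 : (∫⁻ t in Set.Ioi (0:ℝ),
        ENNReal.ofReal (Real.exp (-t)) * ENNReal.ofReal (KK ε u t)) ≤
        ∫⁻ t in Set.Ioi (0:ℝ),
          (ENNReal.ofReal (Real.exp (-t)) * ENNReal.ofReal (‖P.ι w₁‖^2) +
           ENNReal.ofReal (Real.exp (-t)) *
            ((∫⁻ s in Set.Ioc (0:ℝ) t, ENNReal.ofReal ‖f' s‖)^2 *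
              (ENNReal.ofReal (ε^2))⁻¹)) := by
      refine lintegral_mono_ae ?_
      filter_upwards [self_mem_ae_restrict measurableSet_Ioi] with t ht
      exact le_trans (hptwise t ht) (le_of_eq (mul_add _ _ _))
    refine le_trans hstep1 ?_
    rw [lintegral_add_left (f := fun t => ENNReal.ofReal (Real.exp (-t)) * ENNReal.ofReal (‖P.ι w₁‖^2)) (hEm.mul measurable_const)]
    have h1 : (∫⁻ t in Set.Ioi (0:ℝ),
        ENNReal.ofReal (Real.exp (-t)) * ENNReal.ofReal (‖P.ι w₁‖^2))
        = ENNReal.ofReal (‖P.ι w₁‖^2) := by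
      rw [lintegral_mul_const' _ _ ENNReal.ofReal_ne_top, lint_exp, neg_zero,
        Real.exp_zero, ENNReal.ofReal_one, one_mul]
    have h2 : (∫⁻ t in Set.Ioi (0:ℝ), ENNReal.ofReal (Real.exp (-t)) *
        ((∫⁻ s in Set.Ioc (0:ℝ) t, ENNReal.ofReal ‖f' s‖)^2 * (ENNReal.ofReal (ε^2))⁻¹))
        = (ENNReal.ofReal (ε^2))⁻¹ * ∫⁻ t in Set.Ioi (0:ℝ),
            ENNReal.ofReal (Real.exp (-t)) *
              (∫⁻ s in Set.Ioc (0:ℝ) t, ENNReal.ofReal ‖f' s‖)^2 := by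
      simp_rw [show ∀ x y : ℝ≥0∞, x * (y * (ENNReal.ofReal (ε^2))⁻¹) =
        (ENNReal.ofReal (ε^2))⁻¹ * (x * y) from fun x y => by ring]
      rw [lintegral_const_mul' _ _ hinvne]
    rw [h1, h2]
    refine add_le_add_right ?_ _
    calc (ENNReal.ofReal (ε^2))⁻¹ * ∫⁻ t in Set.Ioi (0:ℝ),
          ENNReal.ofReal (Real.exp (-t)) *
            (∫⁻ s in Set.Ioc (0:ℝ) t, ENNReal.ofReal ‖f' s‖)^2
        ≤ (ENNReal.ofReal (ε^2))⁻¹ * (16 * (ENNReal.ofReal (2*ε^2) * ENNReal.ofReal C₀)) :=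
          mul_le_mul_right (hHardy.trans (mul_le_mul_right hRψ _)) _
      _ = 32 * ENNReal.ofReal C₀ := by
          rw [show (2:ℝ)*ε^2 = 2*ε^2 from rfl, ENNReal.ofReal_mul (by norm_num : (0:ℝ) ≤ 2)]
          rw [ENNReal.ofReal_ofNat]
          calc (ENNReal.ofReal (ε^2))⁻¹ *
                (16 * ((2:ℝ≥0∞) * ENNReal.ofReal (ε^2) * ENNReal.ofReal C₀))
              = ((ENNReal.ofReal (ε^2))⁻¹ * ENNReal.ofReal (ε^2)) *
                  (32 * ENNReal.ofReal C₀) := by ring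
            _ = 32 * ENNReal.ofReal C₀ := by rw [hcancel, one_mul]
  refine hkin.trans ?_
  have h32 : (32:ℝ≥0∞) * ENNReal.ofReal C₀ = ENNReal.ofReal (32*C₀) := by
    rw [ENNReal.ofReal_mul (by norm_num : (0:ℝ) ≤ 32), ENNReal.ofReal_ofNat]
  rw [h32, ← ENNReal.ofReal_add (sq_nonneg _) (by positivity)]
  exact ENNReal.ofReal_le_ofReal (by linarith)
end
end

section
/- Let l, m : [0,∞) → [0,∞) be nonnegative locally integrable functions such that (A²l)(t) ≤ m(t) for almost every t > 0. Then for every a > 0, every δ ∈ (0,1), and every T ≥ 0, one has (∫₀^{δa} s e^{-s} ds) · ∫_{T+δa}^{T+a} l(t) dt ≤ ∫_T^{T+a} m(t) dt. -/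
open MeasureTheory ENNReal Filter Set
open scoped RealInnerProductSpace NNReal

noncomputable section

variable {n : ℕ}

/-- Lemma 6.2, the key averaging lemma. -/
theorem statement_16 (l m : ℝ → ℝ) (hl : ∀ t, 0 ≤ l t) (hm : ∀ t, 0 ≤ m t)
    (hlloc : ∀ T > (0 : ℝ), MeasureTheory.IntegrableOn l (Set.Icc 0 T) volume)
    (hmloc : ∀ T > (0 : ℝ), MeasureTheory.IntegrableOn m (Set.Icc 0 T) volume)
    (hyp : ∀ᵐ t ∂(volume.restrict (Set.Ioi (0 : ℝ))),
      A2op (fun s => ENNReal.ofReal (l s)) t ≤ ENNReal.ofReal (m t)) :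
    ∀ a > (0 : ℝ), ∀ δ ∈ Set.Ioo (0 : ℝ) 1, ∀ T ≥ (0 : ℝ),
      (∫ s in (0 : ℝ)..(δ * a), s * Real.exp (-s)) *
          ∫ t in (T + δ * a)..(T + a), l t ≤
        ∫ t in T..(T + a), m t := by
  intro a ha δ hδ T hT
  obtain ⟨hδ0, hδ1⟩ := hδ
  set p := T + δ * a with hp
  set b := T + a with hb
  have hδa : 0 < δ * a := mul_pos hδ0 ha
  have hδaa : δ * a < a := by nlinarith
  have hTb : T < b := by simp only [hb]; linarith
  have hTp : T < p := by simp only [hp]; linarith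
  have hpb : p < b := by simp only [hp, hb]; linarith
  have hb0 : 0 < b := lt_of_le_of_lt hT hTb
  have hIoc_sub : Set.Ioc p b ⊆ Set.Icc 0 b := fun x hx =>
    ⟨le_of_lt (lt_of_le_of_lt (le_trans hT hTp.le) hx.1), hx.2⟩
  have hlint : IntegrableOn l (Set.Ioc p b) volume := (hlloc b hb0).mono_set hIoc_sub
  have hmint : IntegrableOn m (Set.Ioc T b) volume :=
    (hmloc b hb0).mono_set (fun x hx => ⟨le_trans hT hx.1.le, hx.2⟩)
  have hLae : AEMeasurable l (volume.restrict (Set.Ioc p b)) := hlint.aemeasurable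
  set L := hLae.mk l with hLdef
  have hLmeas : Measurable L := hLae.measurable_mk
  have hLeq : l =ᵐ[volume.restrict (Set.Ioc p b)] L := hLae.ae_eq_mk
  set f₁ : ℝ → ℝ≥0∞ :=
    (Set.Ioo (0:ℝ) (δ*a)).indicator (fun u => ENNReal.ofReal (u * Real.exp (-u))) with hf₁
  set f₂ : ℝ → ℝ≥0∞ := (Set.Ioc p b).indicator (fun s => ENNReal.ofReal (L s)) with hf₂
  have hf₁m : Measurable f₁ :=
    ((ENNReal.measurable_ofReal.comp (by fun_prop : Measurable fun u : ℝ =>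
      u * Real.exp (-u)))).indicator measurableSet_Ioo
  have hf₂m : Measurable f₂ :=
    (ENNReal.measurable_ofReal.comp hLmeas).indicator measurableSet_Ioc
  have hf₂top : ∀ s, f₂ s ≠ ⊤ := by
    intro s
    simp only [hf₂, Set.indicator_apply]
    split <;> simp
  set c := ∫ s in (0:ℝ)..(δ*a), s * Real.exp (-s) with hc
  have hc0 : 0 ≤ c :=
    intervalIntegral.integral_nonneg hδa.le
      (fun u hu => mul_nonneg hu.1 (Real.exp_nonneg _))
  -- value of ∫⁻ f₁
  have hf₁int : ∫⁻ u, f₁ u = ENNReal.ofReal c := by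
    rw [hf₁, lintegral_indicator measurableSet_Ioo,
      Measure.restrict_congr_set Ioo_ae_eq_Ioc,
      ← MeasureTheory.ofReal_integral_eq_lintegral_ofReal
        ((by fun_prop : Continuous fun u : ℝ => u * Real.exp (-u)).integrableOn_Ioc)
        ?_]
    · rw [hc, intervalIntegral.integral_of_le hδa.le]
    · filter_upwards [ae_restrict_mem measurableSet_Ioc] with u hu using
        mul_nonneg hu.1.le (Real.exp_nonneg _)
  -- Tonelli
  have hFm : AEMeasurable (Function.uncurry fun (t s : ℝ) => f₁ (s - t) * f₂ s)
      ((volume : Measure ℝ).prod (volume : Measure ℝ)) := by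
    apply Measurable.aemeasurable
    exact ((hf₁m.comp (measurable_snd.sub measurable_fst)).mul (hf₂m.comp measurable_snd))
  have hswap : ∫⁻ t, ∫⁻ s, f₁ (s - t) * f₂ s = ∫⁻ s, ∫⁻ t, f₁ (s - t) * f₂ s :=
    lintegral_lintegral_swap hFm
  -- right side computation
  have hRHS : ∫⁻ s, ∫⁻ t, f₁ (s - t) * f₂ s =
      ENNReal.ofReal c * ∫⁻ s in Set.Ioc p b, ENNReal.ofReal (L s) := by
    have h1 : ∀ s : ℝ, ∫⁻ t, f₁ (s - t) * f₂ s = ENNReal.ofReal c * f₂ s := by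
      intro s
      rw [lintegral_mul_const' (f₂ s) _ (hf₂top s),
        (Measure.measurePreserving_sub_left volume s).lintegral_comp hf₁m, hf₁int,
        mul_comm]
    simp only [h1]
    rw [lintegral_const_mul' _ _ ENNReal.ofReal_ne_top, hf₂,
      lintegral_indicator measurableSet_Ioc]
  -- left side bound
  have hLHS : ∫⁻ t, ∫⁻ s, f₁ (s - t) * f₂ s ≤ ∫⁻ t in Set.Ioc T b, ENNReal.ofReal (m t) := by
    set Φ : ℝ → ℝ≥0∞ := fun t => ∫⁻ s, f₁ (s - t) * f₂ s with hΦ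
    have hΦ0 : ∀ t, t ∉ Set.Ioo T b → Φ t = 0 := by
      intro t ht
      rw [hΦ]
      simp only
      rw [← lintegral_zero]
      apply lintegral_congr
      intro s
      by_cases h1 : s - t ∈ Set.Ioo (0:ℝ) (δ*a)
      · by_cases h2 : s ∈ Set.Ioc p b
        · exfalso
          apply ht
          constructor
          · have : s - t < δ * a := h1.2
            have : p < s := h2.1
            simp only [hp] at this
            linarith
          · have : 0 < s - t := h1.1
            have : s ≤ b := h2.2
            linarith
        · simp [hf₂, Set.indicator_of_notMem h2]
      · simp [hf₁, Set.indicator_of_notMem h1]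
    have hΦle : ∀ t, Φ t ≤ A2op (fun s => ENNReal.ofReal (l s)) t := by
      intro t
      rw [hΦ]
      simp only
      have step1 : ∫⁻ s, f₁ (s - t) * f₂ s =
          ∫⁻ s in Set.Ioc p b, f₁ (s - t) * ENNReal.ofReal (l s) := by
        rw [← lintegral_indicator measurableSet_Ioc]
        have e1 : (fun s => f₁ (s - t) * f₂ s) =
            fun s => (Set.Ioc p b).indicator (fun s => f₁ (s - t) * ENNReal.ofReal (L s)) s := by
          funext s
          rw [hf₂]
          exact (Set.indicator_mul_right _ (fun s => f₁ (s - t)) _).symm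
        rw [e1]
        apply lintegral_congr_ae
        have hae : ∀ᵐ s ∂(volume : Measure ℝ), s ∈ Set.Ioc p b → l s = L s := by
          rw [← MeasureTheory.ae_restrict_iff' measurableSet_Ioc]
          exact hLeq
        filter_upwards [hae] with s hs
        by_cases h2 : s ∈ Set.Ioc p b
        · simp [Set.indicator_of_mem h2, hs h2]
        · simp [Set.indicator_of_notMem h2]
      rw [step1, A2op, ← lintegral_indicator measurableSet_Ioc,
        ← lintegral_indicator measurableSet_Ioi]
      apply lintegral_mono
      intro s
      by_cases h2 : s ∈ Set.Ioc p b
      · rw [Set.indicator_of_mem h2]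
        by_cases h1 : s - t ∈ Set.Ioo (0:ℝ) (δ*a)
        · have hst : s ∈ Set.Ioi t := by
            have : 0 < s - t := h1.1
            simp only [Set.mem_Ioi]; linarith
          rw [Set.indicator_of_mem hst, hf₁, Set.indicator_of_mem h1]
        · rw [hf₁, Set.indicator_of_notMem h1, zero_mul]
          exact zero_le
      · rw [Set.indicator_of_notMem h2]
        exact zero_le
    calc ∫⁻ t, Φ t = ∫⁻ t in Set.Ioo T b, Φ t := by
          rw [← lintegral_indicator measurableSet_Ioo]
          apply lintegral_congr
          intro t
          by_cases ht : t ∈ Set.Ioo T b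
          · rw [Set.indicator_of_mem ht]
          · rw [Set.indicator_of_notMem ht, hΦ0 t ht]
      _ ≤ ∫⁻ t in Set.Ioo T b, ENNReal.ofReal (m t) := by
          apply lintegral_mono_ae
          have hsub : Set.Ioo T b ⊆ Set.Ioi (0:ℝ) := fun x hx =>
            lt_of_le_of_lt hT hx.1
          filter_upwards [ae_restrict_of_ae_restrict_of_subset hsub hyp] with t ht
          exact le_trans (hΦle t) ht
      _ = ∫⁻ t in Set.Ioc T b, ENNReal.ofReal (m t) := by
          rw [Measure.restrict_congr_set Ioo_ae_eq_Ioc]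
  -- combine
  have key : ENNReal.ofReal c * ∫⁻ s in Set.Ioc p b, ENNReal.ofReal (L s) ≤
      ∫⁻ t in Set.Ioc T b, ENNReal.ofReal (m t) := by
    rw [← hRHS, ← hswap]; exact hLHS
  have hLint : Integrable L (volume.restrict (Set.Ioc p b)) := hlint.congr hLeq
  have hLnn : 0 ≤ᵐ[volume.restrict (Set.Ioc p b)] L := by
    filter_upwards [hLeq] with s hs using hs ▸ hl s
  have hintl : ENNReal.ofReal (∫ t in Set.Ioc p b, l t) =
      ∫⁻ s in Set.Ioc p b, ENNReal.ofReal (L s) := by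
    rw [integral_congr_ae hLeq]
    exact MeasureTheory.ofReal_integral_eq_lintegral_ofReal hLint hLnn
  have hintm : ENNReal.ofReal (∫ t in Set.Ioc T b, m t) =
      ∫⁻ t in Set.Ioc T b, ENNReal.ofReal (m t) :=
    MeasureTheory.ofReal_integral_eq_lintegral_ofReal hmint
      (Filter.Eventually.of_forall fun t => hm t)
  have final : ENNReal.ofReal (c * ∫ t in Set.Ioc p b, l t) ≤
      ENNReal.ofReal (∫ t in Set.Ioc T b, m t) := by
    rw [ENNReal.ofReal_mul hc0, hintl, hintm]
    exact key
  rw [ENNReal.ofReal_le_ofReal_iff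
    (setIntegral_nonneg measurableSet_Ioc fun x _ => hm x)] at final
  rw [intervalIntegral.integral_of_le (by linarith : T ≤ T + a),
    intervalIntegral.integral_of_le (by linarith : T + δ * a ≤ T + a)]
  exact final
end
end

section
/- Assume (H1). Then there exists a constant C' (depending only on the constants C and θ in (H1)) such that for all a, b ∈ W: (i) sup_{λ ∈ [0,1]} G(a + λb) ≤ C'(1 + G(a) + ‖b‖_W^{1/(1-θ)}); and (ii) for every δ ≠ 0, |G(a+δb) − G(a)| ≤ C'|δ| ‖b‖_W (1 + G(a) + |δ|^{1/(1-θ)} ‖b‖_W^{1/(1-θ)}). -/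
open MeasureTheory ENNReal Filter Set
open scoped RealInnerProductSpace NNReal

noncomputable section

variable {n : ℕ}

private lemma seg_deriv {n : ℕ} {W : Type*} [NormedAddCommGroup W] [NormedSpace ℝ W]
    [CompleteSpace W] (P : H1Data n W) (a b : W) (l : ℝ) :
    HasDerivAt (fun t : ℝ => (P.G (P.ι (a + t • b))).toReal)
      (P.gradG (P.ι (a + l • b)) b) l := by
  have h := P.hgrad (a + l • b) b
  have he : (fun δ : ℝ => (P.G (P.ι (a + l • b + δ • b))).toReal)
      = fun δ : ℝ => (P.G (P.ι (a + (l + δ) • b))).toReal := by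
    funext δ; rw [add_smul, add_assoc]
  rw [he] at h
  have h' : HasDerivAt (fun δ : ℝ => (P.G (P.ι (a + (l + δ) • b))).toReal)
      (P.gradG (P.ι (a + l • b)) b) (l - l) := by simpa using h
  have h3 := h'.comp_sub_const l l
  have he2 : (fun t : ℝ => (P.G (P.ι (a + (l + (t - l)) • b))).toReal)
      = fun t : ℝ => (P.G (P.ι (a + t • b))).toReal := by
    funext t; rw [show l + (t - l) = t by ring]
  rwa [he2] at h3

private lemma seg_bound {n : ℕ} {W : Type*} [NormedAddCommGroup W] [NormedSpace ℝ W]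
    [CompleteSpace W] (P : H1Data n W) (a b : W) {l : ℝ} (hl0 : 0 ≤ l) (hl1 : l ≤ 1) :
    1 + (P.G (P.ι (a + l • b))).toReal ≤
      ((1 + (P.G (P.ι a)).toReal) ^ (1 - P.θ) + 2 * P.CG * ‖b‖) ^ (1 / (1 - P.θ)) := by
  obtain ⟨hθ0, hθ1⟩ := P.hθ
  have h1θ : (0:ℝ) < 1 - P.θ := by linarith
  set g : ℝ → ℝ := fun t => (P.G (P.ι (a + t • b))).toReal with hgdef
  have hgnn : ∀ t, 0 ≤ g t := fun t => ENNReal.toReal_nonneg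
  have hgpos : ∀ t, (0:ℝ) < 1 + g t := fun t => by have := hgnn t; linarith
  set φ : ℝ → ℝ := fun t => (1 + g t) ^ (1 - P.θ) with hφdef
  set φ' : ℝ → ℝ := fun t =>
    (P.gradG (P.ι (a + t • b)) b) * (1 - P.θ) * (1 + g t) ^ (1 - P.θ - 1) with hφ'def
  have hder : ∀ t : ℝ, HasDerivAt φ (φ' t) t := by
    intro t
    have h1 : HasDerivAt (fun s => 1 + g s) (P.gradG (P.ι (a + t • b)) b) t :=
      (seg_deriv P a b t).const_add 1
    exact h1.rpow_const (Or.inl (ne_of_gt (hgpos t)))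
  have hbound : ∀ t : ℝ, |φ' t| ≤ 2 * P.CG * ‖b‖ := by
    intro t
    have hA : |P.gradG (P.ι (a + t • b)) b| ≤ P.CG * (1 + g t ^ P.θ) * ‖b‖ := by
      calc |P.gradG (P.ι (a + t • b)) b| = ‖P.gradG (P.ι (a + t • b)) b‖ := rfl
        _ ≤ ‖P.gradG (P.ι (a + t • b))‖ * ‖b‖ := (P.gradG (P.ι (a + t • b))).le_opNorm b
        _ ≤ P.CG * (1 + g t ^ P.θ) * ‖b‖ :=
            mul_le_mul_of_nonneg_right (P.grad_bound (a + t • b)) (norm_nonneg b)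
    have e1 : (1 + g t) ^ (-P.θ) ≤ 1 :=
      Real.rpow_le_one_of_one_le_of_nonpos (by linarith [hgnn t]) (by linarith)
    have e2 : g t ^ P.θ ≤ (1 + g t) ^ P.θ :=
      Real.rpow_le_rpow (hgnn t) (by linarith) hθ0.le
    have e3 : (1 + g t) ^ P.θ * (1 + g t) ^ (-P.θ) = 1 := by
      rw [← Real.rpow_add (hgpos t)]; simp
    have e4 : (0:ℝ) ≤ (1 + g t) ^ (-P.θ) := Real.rpow_nonneg (hgpos t).le _
    have e5 : (0:ℝ) ≤ g t ^ P.θ := Real.rpow_nonneg (hgnn t) _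
    have hB : (1 + g t ^ P.θ) * (1 + g t) ^ (-P.θ) ≤ 2 := by nlinarith
    have hexp : 1 - P.θ - 1 = -P.θ := by ring
    have habs : |φ' t| = |P.gradG (P.ι (a + t • b)) b| * (1 - P.θ) * (1 + g t) ^ (-P.θ) := by
      rw [hφ'def]
      rw [abs_mul, abs_mul, abs_of_nonneg h1θ.le, hexp, abs_of_nonneg e4]
    rw [habs]
    have hCb : (0:ℝ) ≤ P.CG * ‖b‖ := mul_nonneg P.hCG (norm_nonneg b)
    calc |P.gradG (P.ι (a + t • b)) b| * (1 - P.θ) * (1 + g t) ^ (-P.θ)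
        ≤ (P.CG * (1 + g t ^ P.θ) * ‖b‖) * (1 - P.θ) * (1 + g t) ^ (-P.θ) := by
          have h1 : (0:ℝ) ≤ (1 - P.θ) * (1 + g t) ^ (-P.θ) := mul_nonneg h1θ.le e4
          calc |P.gradG (P.ι (a + t • b)) b| * (1 - P.θ) * (1 + g t) ^ (-P.θ)
              = |P.gradG (P.ι (a + t • b)) b| * ((1 - P.θ) * (1 + g t) ^ (-P.θ)) := by ring
            _ ≤ (P.CG * (1 + g t ^ P.θ) * ‖b‖) * ((1 - P.θ) * (1 + g t) ^ (-P.θ)) :=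
                mul_le_mul_of_nonneg_right hA h1
            _ = (P.CG * (1 + g t ^ P.θ) * ‖b‖) * (1 - P.θ) * (1 + g t) ^ (-P.θ) := by ring
      _ = (P.CG * ‖b‖) * ((1 + g t ^ P.θ) * (1 + g t) ^ (-P.θ)) * (1 - P.θ) := by ring
      _ ≤ (P.CG * ‖b‖) * 2 * 1 := by
          have h2 : (0:ℝ) ≤ (1 + g t ^ P.θ) * (1 + g t) ^ (-P.θ) :=
            mul_nonneg (by linarith) e4
          nlinarith [mul_le_mul_of_nonneg_left hB hCb,
            mul_nonneg hCb (mul_nonneg h2 hθ0.le)]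
      _ = 2 * P.CG * ‖b‖ := by ring
  have hmvt : ‖φ l - φ 0‖ ≤ 2 * P.CG * ‖b‖ * ‖l - 0‖ :=
    (convex_Icc (0:ℝ) 1).norm_image_sub_le_of_norm_hasDerivWithin_le
      (fun x _ => (hder x).hasDerivWithinAt)
      (fun x _ => by simpa [Real.norm_eq_abs] using hbound x)
      ⟨le_refl 0, zero_le_one⟩ ⟨hl0, hl1⟩
  have hK : (0:ℝ) ≤ 2 * P.CG * ‖b‖ := mul_nonneg (by linarith [P.hCG]) (norm_nonneg b)
  have hφl : φ l ≤ φ 0 + 2 * P.CG * ‖b‖ := by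
    have h1 : |φ l - φ 0| ≤ 2 * P.CG * ‖b‖ * |l| := by simpa [Real.norm_eq_abs] using hmvt
    have h2 : |l| ≤ 1 := by rw [abs_of_nonneg hl0]; exact hl1
    have h3 : 2 * P.CG * ‖b‖ * |l| ≤ 2 * P.CG * ‖b‖ := by nlinarith
    have := abs_le.mp (h1.trans h3)
    linarith [this.2]
  have hφ0 : φ 0 = (1 + (P.G (P.ι a)).toReal) ^ (1 - P.θ) := by
    simp [hφdef, hgdef]
  have hmul : (1 - P.θ) * (1 / (1 - P.θ)) = 1 := mul_one_div_cancel (ne_of_gt h1θ)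
  calc 1 + g l = ((1 + g l) ^ (1 - P.θ)) ^ (1 / (1 - P.θ)) := by
        rw [← Real.rpow_mul (hgpos l).le, hmul, Real.rpow_one]
    _ ≤ ((1 + (P.G (P.ι a)).toReal) ^ (1 - P.θ) + 2 * P.CG * ‖b‖) ^ (1 / (1 - P.θ)) := by
        apply Real.rpow_le_rpow (Real.rpow_nonneg (hgpos l).le _) _ (by positivity)
        rw [← hφ0]; exact hφl

private lemma two_rpow_aux {p : ℝ} (hp : 0 ≤ p) : ∀ x y : ℝ, 0 ≤ x → 0 ≤ y →
    (x + y) ^ p ≤ 2 ^ p * (x ^ p + y ^ p) := by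
  intro x y hx hy
  have h1 : x + y ≤ 2 * max x y := by
    have := le_max_left x y; have := le_max_right x y; linarith
  have hmax : (0:ℝ) ≤ max x y := le_trans hx (le_max_left x y)
  calc (x + y) ^ p ≤ (2 * max x y) ^ p := Real.rpow_le_rpow (by linarith) h1 hp
    _ = 2 ^ p * (max x y) ^ p := Real.mul_rpow (by norm_num) hmax
    _ ≤ 2 ^ p * (x ^ p + y ^ p) := by
        have h2 : (max x y) ^ p ≤ x ^ p + y ^ p := by
          rcases le_total x y with h | h
          · rw [max_eq_right h]; nlinarith [Real.rpow_nonneg hx p]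
          · rw [max_eq_left h]; nlinarith [Real.rpow_nonneg hy p]
        have h3 : (0:ℝ) ≤ (2:ℝ) ^ p := Real.rpow_nonneg (by norm_num) p
        nlinarith

/-- consequences (2.13) and (2.16) of assumption (H1):
growth along segments and Lipschitz estimate. -/
theorem statement_17 {n : ℕ} {W : Type*}
    [NormedAddCommGroup W] [NormedSpace ℝ W] [CompleteSpace W]
    (P : H1Data n W) :
    ∃ C' : ℝ, 0 ≤ C' ∧ ∀ a b : W,
      (∀ lam ∈ Set.Icc (0 : ℝ) 1,
        (P.G (P.ι (a + lam • b))).toReal ≤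
          C' * (1 + (P.G (P.ι a)).toReal + ‖b‖ ^ (1 / (1 - P.θ)))) ∧
      (∀ δ : ℝ, δ ≠ 0 →
        |(P.G (P.ι (a + δ • b))).toReal - (P.G (P.ι a)).toReal| ≤
          C' * |δ| * ‖b‖ *
            (1 + (P.G (P.ι a)).toReal +
              |δ| ^ (1 / (1 - P.θ)) * ‖b‖ ^ (1 / (1 - P.θ)))) := by
  obtain ⟨hθ0, hθ1⟩ := P.hθ
  have h1θ : (0:ℝ) < 1 - P.θ := by linarith
  have hp0 : (0:ℝ) ≤ 1 / (1 - P.θ) := (one_div_pos.mpr h1θ).le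
  have hC2 : (0:ℝ) ≤ 2 * P.CG := by linarith [P.hCG]
  have h2p : (0:ℝ) ≤ (2:ℝ) ^ (1 / (1 - P.θ)) := Real.rpow_nonneg (by norm_num) _
  have hCp : (0:ℝ) ≤ (2 * P.CG) ^ (1 / (1 - P.θ)) := Real.rpow_nonneg hC2 _
  set C1 : ℝ := 2 ^ (1 / (1 - P.θ)) * (1 + (2 * P.CG) ^ (1 / (1 - P.θ))) with hC1
  have hC1nn : 0 ≤ C1 := mul_nonneg h2p (by linarith)
  refine ⟨C1 * (1 + 2 * P.CG), mul_nonneg hC1nn (by linarith), ?_⟩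
  intro a b
  have hg0nn : 0 ≤ (P.G (P.ι a)).toReal := ENNReal.toReal_nonneg
  have key : ∀ c : W, ∀ l : ℝ, 0 ≤ l → l ≤ 1 →
      1 + (P.G (P.ι (a + l • c))).toReal ≤
        C1 * (1 + (P.G (P.ι a)).toReal + ‖c‖ ^ (1 / (1 - P.θ))) := by
    intro c l h0 h1
    have hs := seg_bound P a c h0 h1
    have hx : (0:ℝ) ≤ (1 + (P.G (P.ι a)).toReal) ^ (1 - P.θ) :=
      Real.rpow_nonneg (by linarith) _
    have hy : (0:ℝ) ≤ 2 * P.CG * ‖c‖ := mul_nonneg hC2 (norm_nonneg c)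
    have h2 := two_rpow_aux hp0 _ _ hx hy
    have hxp : (((1 + (P.G (P.ι a)).toReal) ^ (1 - P.θ)) ^ (1 / (1 - P.θ)))
        = 1 + (P.G (P.ι a)).toReal := by
      rw [← Real.rpow_mul (by linarith : (0:ℝ) ≤ 1 + (P.G (P.ι a)).toReal),
        mul_one_div_cancel (ne_of_gt h1θ), Real.rpow_one]
    have hyp : (2 * P.CG * ‖c‖) ^ (1 / (1 - P.θ))
        = (2 * P.CG) ^ (1 / (1 - P.θ)) * ‖c‖ ^ (1 / (1 - P.θ)) :=
      Real.mul_rpow hC2 (norm_nonneg c)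
    rw [hxp, hyp] at h2
    have hcp : (0:ℝ) ≤ ‖c‖ ^ (1 / (1 - P.θ)) := Real.rpow_nonneg (norm_nonneg c) _
    have h3 := hs.trans h2
    rw [hC1]
    nlinarith [mul_nonneg h2p hCp, mul_nonneg (mul_nonneg h2p hCp) hg0nn,
      mul_nonneg h2p hcp]
  constructor
  · intro lam hlam
    have hk := key b lam hlam.1 hlam.2
    have hb : (0:ℝ) ≤ ‖b‖ ^ (1 / (1 - P.θ)) := Real.rpow_nonneg (norm_nonneg b) _
    have hGnn : (0:ℝ) ≤ (P.G (P.ι (a + lam • b))).toReal := ENNReal.toReal_nonneg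
    nlinarith [mul_nonneg hC1nn (mul_nonneg hC2 (by linarith : (0:ℝ) ≤ 1 + (P.G (P.ι a)).toReal + ‖b‖ ^ (1 / (1 - P.θ))))]
  · intro δ hδ
    have hS : (0:ℝ) ≤ 1 + (P.G (P.ι a)).toReal + ‖δ • b‖ ^ (1 / (1 - P.θ)) := by
      have := Real.rpow_nonneg (norm_nonneg (δ • b)) (1 / (1 - P.θ)); linarith
    have hbd : ∀ t ∈ Set.Icc (0:ℝ) 1,
        ‖P.gradG (P.ι (a + t • (δ • b))) (δ • b)‖ ≤
          2 * P.CG * ‖δ • b‖ * (C1 * (1 + (P.G (P.ι a)).toReal + ‖δ • b‖ ^ (1 / (1 - P.θ)))) := by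
      intro t ht
      have hψnn : 0 ≤ (P.G (P.ι (a + t • (δ • b)))).toReal := ENNReal.toReal_nonneg
      have hA : ‖P.gradG (P.ι (a + t • (δ • b))) (δ • b)‖ ≤
          P.CG * (1 + (P.G (P.ι (a + t • (δ • b)))).toReal ^ P.θ) * ‖δ • b‖ := by
        calc ‖P.gradG (P.ι (a + t • (δ • b))) (δ • b)‖
            ≤ ‖P.gradG (P.ι (a + t • (δ • b)))‖ * ‖δ • b‖ :=
              (P.gradG (P.ι (a + t • (δ • b)))).le_opNorm (δ • b)
          _ ≤ P.CG * (1 + (P.G (P.ι (a + t • (δ • b)))).toReal ^ P.θ) * ‖δ • b‖ :=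
              mul_le_mul_of_nonneg_right (P.grad_bound (a + t • (δ • b))) (norm_nonneg _)
      have hth : (P.G (P.ι (a + t • (δ • b)))).toReal ^ P.θ ≤
          1 + (P.G (P.ι (a + t • (δ • b)))).toReal := by
        calc (P.G (P.ι (a + t • (δ • b)))).toReal ^ P.θ
            ≤ (1 + (P.G (P.ι (a + t • (δ • b)))).toReal) ^ P.θ :=
              Real.rpow_le_rpow hψnn (by linarith) hθ0.le
          _ ≤ (1 + (P.G (P.ι (a + t • (δ • b)))).toReal) ^ (1:ℝ) :=
              Real.rpow_le_rpow_of_exponent_le (by linarith) hθ1.le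
          _ = 1 + (P.G (P.ι (a + t • (δ • b)))).toReal := Real.rpow_one _
      have hkey := key (δ • b) t ht.1 ht.2
      nlinarith [norm_nonneg (δ • b), P.hCG,
        mul_nonneg P.hCG (norm_nonneg (δ • b)),
        mul_nonneg (mul_nonneg P.hCG (norm_nonneg (δ • b))) hψnn,
        mul_nonneg (mul_nonneg P.hCG (norm_nonneg (δ • b)))
          (by linarith : (0:ℝ) ≤ 1 + (P.G (P.ι (a + t • (δ • b)))).toReal)]
    have hmvt := (convex_Icc (0:ℝ) 1).norm_image_sub_le_of_norm_hasDerivWithin_le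
      (f := fun t : ℝ => (P.G (P.ι (a + t • (δ • b)))).toReal)
      (f' := fun t : ℝ => P.gradG (P.ι (a + t • (δ • b))) (δ • b))
      (fun x _ => (seg_deriv P a (δ • b) x).hasDerivWithinAt) hbd
      ⟨le_refl 0, zero_le_one⟩ ⟨zero_le_one, le_refl 1⟩
    have hmvt' : |(P.G (P.ι (a + δ • b))).toReal - (P.G (P.ι a)).toReal| ≤
        2 * P.CG * ‖δ • b‖ * (C1 * (1 + (P.G (P.ι a)).toReal + ‖δ • b‖ ^ (1 / (1 - P.θ)))) := by
      have h1 : a + (1:ℝ) • (δ • b) = a + δ • b := by rw [one_smul]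
      have h0 : a + (0:ℝ) • (δ • b) = a := by rw [zero_smul, add_zero]
      simpa [h1, h0, Real.norm_eq_abs] using hmvt
    have hnc : ‖δ • b‖ = |δ| * ‖b‖ := by rw [norm_smul, Real.norm_eq_abs]
    have hncp : ‖δ • b‖ ^ (1 / (1 - P.θ)) = |δ| ^ (1 / (1 - P.θ)) * ‖b‖ ^ (1 / (1 - P.θ)) := by
      rw [hnc, Real.mul_rpow (abs_nonneg δ) (norm_nonneg b)]
    rw [hncp, hnc] at hmvt'
    rw [hncp] at hS
    have ht0 : (0:ℝ) ≤ |δ| * ‖b‖ := mul_nonneg (abs_nonneg δ) (norm_nonneg b)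
    nlinarith [mul_nonneg hC1nn (mul_nonneg ht0 hS), hmvt']

end
end
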